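/- For a free monoid on a finite alphabet A with a distinguished subset B of separator letters, the syllable order with separators B — the lexicographic combination of first comparing the projections onto words over B (in shortlex order) and then comparing the projections onto words over A∖B (in shortlex order) — is a noetherian and multiplicative quasiorder on words over A. -/

import Mathlib

section Aux

variable {A : Type*} [Fintype A] [LinearOrder A]

private def SL (x y : List A) : Prop :=
  x.length < y.length ∨ (x.length = y.length ∧ List.Lex (· < ·) x y)

private theorem SL_trans {x y z : List A} (h1 : SL x y) (h2 : SL y z) : SL x z := by
  rcases h1 with h1 | ⟨e1, l1⟩ <;> rcases h2 with h2 | ⟨e2, l2⟩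
  · exact Or.inl (h1.trans h2)
  · exact Or.inl (e2 ▸ h1)
  · exact Or.inl (e1 ▸ h2)
  · exact Or.inr ⟨e1.trans e2, List.lex_trans lt_trans l1 l2⟩

private theorem SL_irrefl (x : List A) : ¬ SL x x := by
  rintro (h | ⟨_, h⟩)
  · exact lt_irrefl _ h
  · exact irrefl_of (List.Lex (· < ·)) x h

private theorem SL_asymm {x y : List A} (h : SL x y) : ¬ SL y x := fun h' =>
  SL_irrefl x (SL_trans h h')

private theorem SL_trichot (x y : List A) : SL x y ∨ x = y ∨ SL y x := by
  rcases lt_trichotomy x.length y.length with h | h | h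
  · exact Or.inl (Or.inl h)
  · have htri : Std.Trichotomous (List.Lex (α := A) (· < ·)) :=
      List.Lex.trichotomous _
    rcases trichotomous_of (List.Lex (α := A) (· < ·)) x y with l | l | l
    · exact Or.inl (Or.inr ⟨h, l⟩)
    · exact Or.inr (Or.inl l)
    · exact Or.inr (Or.inr (Or.inr ⟨h.symm, l⟩))
  · exact Or.inr (Or.inr (Or.inl h))

private theorem SL_wf : WellFounded (SL (A := A)) := by
  have main : ∀ (n : ℕ) (x : List A), x.length = n → Acc SL x := by
    intro n
    induction n using Nat.strong_induction_on with
    | _ n ih =>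
    intro x hn
    subst hn
    -- well-foundedness of Lex on words of fixed length
    have hfin : Finite {w : List A // w.length = x.length} := by
      have := List.finite_length_eq A x.length
      exact this.to_subtype
    have hwf : WellFounded (fun u v : {w : List A // w.length = x.length} =>
        List.Lex (· < ·) u.1 v.1) := by
      have : IsTrans {w : List A // w.length = x.length}
          (fun u v => List.Lex (· < ·) u.1 v.1) :=
        ⟨fun a b c h1 h2 => List.lex_trans lt_trans h1 h2⟩
      have : IsIrrefl {w : List A // w.length = x.length}
          (fun u v => List.Lex (· < ·) u.1 v.1) :=
        ⟨fun a => irrefl_of (List.Lex (· < ·)) a.1⟩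
      exact Finite.wellFounded_of_trans_of_irrefl _
    have key : ∀ u : {w : List A // w.length = x.length}, Acc SL u.1 := by
      intro u
      induction u using hwf.induction with
      | _ u ihl =>
      constructor
      rintro y (h | ⟨e, l⟩)
      · exact ih y.length (u.2 ▸ h) y rfl
      · exact ihl ⟨y, e.trans u.2⟩ l
    exact key ⟨x, rfl⟩
  constructor
  intro x
  exact main x.length x rfl

private theorem Lex_append_right_of_length_eq {u v : List A}
    (h : List.Lex (· < ·) u v) (e : u.length = v.length) (w : List A) :
    List.Lex (· < ·) (u ++ w) (v ++ w) := by
  induction h with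
  | nil => simp at e
  | @cons a l1 l2 _ ih =>
      exact List.Lex.cons (ih (by simpa using e))
  | rel h => exact List.Lex.rel h

private theorem SL_append_left {u v : List A} (h : SL u v) (w : List A) :
    SL (w ++ u) (w ++ v) := by
  rcases h with h | ⟨e, l⟩
  · exact Or.inl (by simpa using h)
  · exact Or.inr ⟨by simpa using e, List.Lex.append_left _ l w⟩

private theorem SL_append_right {u v : List A} (h : SL u v) (w : List A) :
    SL (u ++ w) (v ++ w) := by
  rcases h with h | ⟨e, l⟩
  · exact Or.inl (by simpa using h)
  · exact Or.inr ⟨by simpa using e, Lex_append_right_of_length_eq l e w⟩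

end Aux

/-- The syllable order with separator letters `B` on words over a finite totally
ordered alphabet is a noetherian and multiplicative quasiorder. -/
theorem syllable_order_noetherian_multiplicative {A : Type*} [Fintype A] [LinearOrder A]
    (B : Set A) [DecidablePred (· ∈ B)] :
    let sl : List A → List A → Prop := fun x y =>
      x.length < y.length ∨ (x.length = y.length ∧ List.Lex (· < ·) x y)
    let fB : List A → List A := fun w => w.filter (fun a => decide (a ∈ B))
    let fA : List A → List A := fun w => w.filter (fun a => decide (a ∉ B))
    let r : List A → List A → Prop := fun x y =>
      sl (fB x) (fB y) ∨ (fB x = fB y ∧ (sl (fA x) (fA y) ∨ fA x = fA y))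
    Reflexive r ∧ Transitive r ∧
    WellFounded (fun x y => r x y ∧ ¬ r y x) ∧
    (∀ p s x y : List A,
      ((r x y ∧ ¬ r y x) →
        (r (p ++ x) (p ++ y) ∧ ¬ r (p ++ y) (p ++ x)) ∧
        (r (x ++ s) (y ++ s) ∧ ¬ r (y ++ s) (x ++ s))) ∧
      ((r x y ∧ r y x) →
        (r (p ++ x) (p ++ y) ∧ r (p ++ y) (p ++ x)) ∧
        (r (x ++ s) (y ++ s) ∧ r (y ++ s) (x ++ s)))) := by
  intro sl fB fA r
  have hsl : sl = SL (A := A) := rfl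
  -- r x y with sl replaced by SL
  have r_def : ∀ x y, r x y ↔
      (SL (fB x) (fB y) ∨ (fB x = fB y ∧ (SL (fA x) (fA y) ∨ fA x = fA y))) := by
    intro x y; exact Iff.rfl
  -- the strict part of r
  have strict_iff : ∀ x y, (r x y ∧ ¬ r y x) ↔
      (SL (fB x) (fB y) ∨ (fB x = fB y ∧ SL (fA x) (fA y))) := by
    intro x y
    constructor
    · rintro ⟨h1, h2⟩
      rw [r_def] at h1
      rcases h1 with h | ⟨e, h | e'⟩
      · exact Or.inl h
      · exact Or.inr ⟨e, h⟩
      · exact absurd ((r_def y x).2 (Or.inr ⟨e.symm, Or.inr e'.symm⟩)) h2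
    · rintro (h | ⟨e, h⟩)
      · refine ⟨(r_def x y).2 (Or.inl h), fun hr => ?_⟩
        rw [r_def] at hr
        rcases hr with h' | ⟨e', _⟩
        · exact SL_asymm h h'
        · exact SL_irrefl _ (e' ▸ h)
      · refine ⟨(r_def x y).2 (Or.inr ⟨e, Or.inl h⟩), fun hr => ?_⟩
        rw [r_def] at hr
        rcases hr with h' | ⟨_, h' | e'⟩
        · exact SL_irrefl _ (e ▸ h')
        · exact SL_asymm h h'
        · exact SL_irrefl _ (e' ▸ h)
  have hfBapp : ∀ u v : List A, fB (u ++ v) = fB u ++ fB v := by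
    intro u v; simp [fB, List.filter_append]
  have hfAapp : ∀ u v : List A, fA (u ++ v) = fA u ++ fA v := by
    intro u v; simp [fA, List.filter_append]
  refine ⟨?_, ?_, ?_, ?_⟩
  · -- reflexive
    intro x
    exact (r_def x x).2 (Or.inr ⟨rfl, Or.inr rfl⟩)
  · -- transitive
    intro x y z hxy hyz
    rw [r_def] at hxy hyz ⊢
    rcases hxy with h1 | ⟨e1, h1⟩ <;> rcases hyz with h2 | ⟨e2, h2⟩
    · exact Or.inl (SL_trans h1 h2)
    · exact Or.inl (e2 ▸ h1)
    · exact Or.inl (e1 ▸ h2)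
    · refine Or.inr ⟨e1.trans e2, ?_⟩
      rcases h1 with h1 | e1' <;> rcases h2 with h2 | e2'
      · exact Or.inl (SL_trans h1 h2)
      · exact Or.inl (e2' ▸ h1)
      · exact Or.inl (e1' ▸ h2)
      · exact Or.inr (e1'.trans e2')
  · -- noetherian
    have : Subrelation (fun x y => r x y ∧ ¬ r y x)
        (InvImage (Prod.Lex SL SL) (fun w => (fB w, fA w))) := by
      intro x y h
      rw [strict_iff] at h
      rcases h with h | ⟨e, h⟩
      · exact Prod.Lex.left _ _ h
      · show Prod.Lex SL SL (fB x, fA x) (fB y, fA y)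
        rw [e]; exact Prod.Lex.right _ h
    exact this.wf (InvImage.wf _ (WellFounded.prod_lex SL_wf SL_wf))
  · -- multiplicative
    intro p s x y
    have strict_mul : ∀ u v w : List A, (r u v ∧ ¬ r v u) →
        (r (w ++ u) (w ++ v) ∧ ¬ r (w ++ v) (w ++ u)) ∧
        (r (u ++ w) (v ++ w) ∧ ¬ r (v ++ w) (u ++ w)) := by
      intro u v w h
      rw [strict_iff] at h
      constructor
      · rw [strict_iff, hfBapp, hfBapp, hfAapp, hfAapp]
        rcases h with h | ⟨e, h⟩
        · exact Or.inl (SL_append_left h _)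
        · exact Or.inr ⟨by rw [e], SL_append_left h _⟩
      · rw [strict_iff, hfBapp, hfBapp, hfAapp, hfAapp]
        rcases h with h | ⟨e, h⟩
        · exact Or.inl (SL_append_right h _)
        · exact Or.inr ⟨by rw [e], SL_append_right h _⟩
    have equiv_iff : ∀ u v, (r u v ∧ r v u) ↔ (fB u = fB v ∧ fA u = fA v) := by
      intro u v
      constructor
      · rintro ⟨h1, h2⟩
        rw [r_def] at h1 h2
        rcases h1 with h1 | ⟨e1, h1⟩
        · rcases h2 with h2 | ⟨e2, _⟩
          · exact absurd h2 (SL_asymm h1)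
          · exact absurd h1 (e2 ▸ SL_irrefl _)
        · refine ⟨e1, ?_⟩
          rcases h1 with h1 | e1'
          · rcases h2 with h2 | ⟨_, h2 | e2'⟩
            · exact absurd h2 (e1 ▸ SL_irrefl _)
            · exact absurd h2 (SL_asymm h1)
            · exact absurd h1 (e2' ▸ SL_irrefl _)
          · exact e1'
      · rintro ⟨e1, e2⟩
        exact ⟨(r_def u v).2 (Or.inr ⟨e1, Or.inr e2⟩),
          (r_def v u).2 (Or.inr ⟨e1.symm, Or.inr e2.symm⟩)⟩
    refine ⟨fun h => ?_, fun h => ?_⟩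
    · exact ⟨(strict_mul x y p h).1, (strict_mul x y s h).2⟩
    · rw [equiv_iff] at h
      obtain ⟨e1, e2⟩ := h
      have req : ∀ u v, fB u = fB v → fA u = fA v → r u v := fun u v h1 h2 =>
        (r_def u v).2 (Or.inr ⟨h1, Or.inr h2⟩)
      refine ⟨⟨?_, ?_⟩, ?_, ?_⟩ <;>
        exact req _ _ (by rw [hfBapp, hfBapp]; simp [e1]) (by rw [hfAapp, hfAapp]; simp [e2])
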